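/- Let G be a graph on n vertices with girth strictly greater than 2t+1. Let x_1, …, x_n be an ordering of the vertices with x_1 = u, x_n = v, and d_H(u, x_{j−1}) ≤ d_H(u, x_j) for 2 ≤ j ≤ n−1, where H = G minus edge (u,v), and suppose (u,v) is an edge of G with (u,v) removed in H. Suppose S = {(x_{i_1},x_{j_1}),…,(x_{i_s},x_{j_s})} ⊆ E(H) is a set of edges with i_k < j_k, 1 = i_1 < i_2 < ⋯ < i_s, j_1 < ⋯ < j_s = n, and j_{k−1} ≥ i_k for all 2 ≤ k ≤ s. Then d_H(u, x_{j_k}) ≤ k for all 1 ≤ k ≤ s; in particular d_H(u,v) ≤ s, and hence s ≥ 2t+1. -/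

import Mathlib

/-- Let G have girth > 2t+1 and edge (u,v); H = G − (u,v); x_1,…,x_n an
ordering of the vertices with x_1 = u, x_n = v, nondecreasing in H-distance from u.
If S = {(x_{i_k}, x_{j_k})} ⊆ E(H) satisfies i_k < j_k, 1 = i_1 < ⋯ < i_s,
j_1 < ⋯ < j_s = n and j_{k−1} ≥ i_k, then d_H(u, x_{j_k}) ≤ k for all k; in particular
d_H(u,v) ≤ s and hence s ≥ 2t+1. -/
theorem stmt8 {V : Type*} [Fintype V] [DecidableEq V] (G : SimpleGraph V) (t : ℕ)
    (hg : ((2 * t + 1 : ℕ) : ℕ∞) < G.girth)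
    (u v : V) (huv : G.Adj u v)
    (H : SimpleGraph V) (hH : H = G.deleteEdges {s(u, v)})
    (n : ℕ) (hn : n = Fintype.card V)
    (x : ℕ → V) (hbij : Set.BijOn x (Set.Icc 1 n) Set.univ)
    (hx1 : x 1 = u) (hxn : x n = v)
    (hreach : ∀ j, 1 ≤ j → j ≤ n → H.Reachable u (x j))
    (hmono : ∀ j, 2 ≤ j → j ≤ n - 1 → H.dist u (x (j - 1)) ≤ H.dist u (x j))
    (s : ℕ) (hs : 1 ≤ s) (ia ja : ℕ → ℕ)
    (hrange : ∀ k, 1 ≤ k → k ≤ s → 1 ≤ ia k ∧ ja k ≤ n)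
    (hedge : ∀ k, 1 ≤ k → k ≤ s → H.Adj (x (ia k)) (x (ja k)))
    (hij : ∀ k, 1 ≤ k → k ≤ s → ia k < ja k)
    (hi1 : ia 1 = 1) (hjs : ja s = n)
    (himono : ∀ k, 2 ≤ k → k ≤ s → ia (k - 1) < ia k)
    (hjmono : ∀ k, 2 ≤ k → k ≤ s → ja (k - 1) < ja k)
    (hoverlap : ∀ k, 2 ≤ k → k ≤ s → ia k ≤ ja (k - 1)) :
    (∀ k, 1 ≤ k → k ≤ s → H.dist u (x (ja k)) ≤ k) ∧
    H.dist u v ≤ s ∧ 2 * t + 1 ≤ s := by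
  -- step lemma: adjacency gives dist inequality
  have step : ∀ a b : V, H.Reachable u a → H.Adj a b → H.dist u b ≤ H.dist u a + 1 := by
    intro a b hr hab
    obtain ⟨p, -, hp⟩ := hr.exists_path_of_dist
    calc H.dist u b ≤ (p.concat hab).length := SimpleGraph.dist_le _
      _ = H.dist u a + 1 := by rw [SimpleGraph.Walk.length_concat, hp]
  -- monotonicity chain
  have mono : ∀ b, b ≤ n - 1 → ∀ a, 1 ≤ a → a ≤ b →
      H.dist u (x a) ≤ H.dist u (x b) := by
    intro b
    induction b with
    | zero => intro _ a h1 h2; omega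
    | succ m ih =>
      intro hb a h1 h2
      rcases Nat.lt_or_ge a (m + 1) with h | h
      · have hstep : H.dist u (x m) ≤ H.dist u (x (m + 1)) := by
          have := hmono (m + 1) (by omega) hb
          simpa using this
        exact le_trans (ih (by omega) a h1 (by omega)) hstep
      · have : a = m + 1 := by omega
        subst this; exact le_refl _
  -- main claim
  have claim : ∀ k, 1 ≤ k → k ≤ s → H.dist u (x (ja k)) ≤ k := by
    intro k
    induction k with
    | zero => omega
    | succ m ih =>
      intro _ hk
      rcases Nat.eq_zero_or_pos m with hm | hm
      · subst hm
        have he := hedge 1 le_rfl hk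
        rw [hi1, hx1] at he
        calc H.dist u (x (ja 1)) ≤ H.dist u u + 1 :=
              step u _ (SimpleGraph.Reachable.refl u) he
          _ = 1 := by simp
      · -- m ≥ 1, k = m + 1 ≥ 2
        have h2 : 2 ≤ m + 1 := by omega
        have hms : m ≤ s := by omega
        have hprev : H.dist u (x (ja m)) ≤ m := ih hm hms
        have hov := hoverlap (m + 1) h2 hk
        simp only [Nat.add_sub_cancel] at hov
        have hjm : ja m < ja (m + 1) := by
          have := hjmono (m + 1) h2 hk
          simpa using this
        have hjn : ja (m + 1) ≤ n := (hrange (m + 1) (by omega) hk).2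
        have hia1 : 1 ≤ ia (m + 1) := (hrange (m + 1) (by omega) hk).1
        have hle : H.dist u (x (ia (m + 1))) ≤ H.dist u (x (ja m)) :=
          mono (ja m) (by omega) (ia (m + 1)) hia1 hov
        have hreach' : H.Reachable u (x (ia (m + 1))) := by
          refine hreach (ia (m + 1)) hia1 ?_
          have := hij (m + 1) (by omega) hk
          omega
        have := step _ _ hreach' (hedge (m + 1) (by omega) hk)
        omega
  refine ⟨claim, ?_⟩
  have hduv : H.dist u v ≤ s := by
    have := claim s hs le_rfl
    rwa [hjs, hxn] at this
  refine ⟨hduv, ?_⟩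
  -- girth argument
  have hle : H ≤ G := hH ▸ SimpleGraph.deleteEdges_le _
  have hn1 : 1 ≤ n := by
    rw [hn]; exact Fintype.card_pos_iff.mpr ⟨u⟩
  have hruv : H.Reachable u v := by
    have := hreach n hn1 le_rfl
    rwa [hxn] at this
  obtain ⟨p, hp, hplen⟩ := hruv.exists_path_of_dist
  set q : G.Walk u v := p.mapLe hle with hq
  have hqpath : q.IsPath := hp.mapLe hle
  have hnotmem : s(v, u) ∉ q.edges := by
    intro hmem
    have : s(v, u) ∈ H.edgeSet := by
      have : q.edges = p.edges := by
        have hco : ⇑(SimpleGraph.Hom.ofLE hle) = id := rfl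
        simp [hq, SimpleGraph.Walk.mapLe, SimpleGraph.Walk.edges_map, hco, Sym2.map_id, List.map_id]
      rw [this] at hmem
      exact p.edges_subset_edgeSet hmem
    rw [hH] at this
    simp [SimpleGraph.deleteEdges, Sym2.eq_swap] at this
  have hcyc : (SimpleGraph.Walk.cons huv.symm q).IsCycle :=
    (SimpleGraph.Walk.cons_isCycle_iff q huv.symm).mpr ⟨hqpath, hnotmem⟩
  have hegirth : G.egirth ≤ ((SimpleGraph.Walk.cons huv.symm q).length : ℕ∞) := by
    refine le_trans ?_ (le_refl _)
    exact iInf_le_of_le v (iInf_le_of_le (SimpleGraph.Walk.cons huv.symm q)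
      (iInf_le_of_le hcyc (le_refl _)))
  have hlen : (SimpleGraph.Walk.cons huv.symm q).length = H.dist u v + 1 := by
    simp [hq, SimpleGraph.Walk.length_cons, SimpleGraph.Walk.mapLe, hplen]
  have hgirth_le : G.girth ≤ H.dist u v + 1 := by
    have := ENat.toNat_le_toNat hegirth (by exact_mod_cast ENat.coe_ne_top ((SimpleGraph.Walk.cons huv.symm q).length))
    have h2 : ((H.dist u v : ℕ∞) + 1).toNat = H.dist u v + 1 := by exact_mod_cast ENat.toNat_coe (H.dist u v + 1)
    simpa [SimpleGraph.girth, hlen, h2] using this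
  have hglt : 2 * t + 1 < G.girth := by exact_mod_cast hg
  omega
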